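/- With a_i, v_i, α_0 as above, if ⟨v_i, α_0⟩ ≥ 1 for all i = 1,...,q, then \overline{I^n} = \overline{(x_1^{a_1},...,x_d^{a_d})^n} for all n ≥ 1, where I = (x^{v_1},...,x^{v_q}). -/

import Mathlib

open MvPolynomial

/-- The integral closure of the `n`-th power of a monomial ideal `I`,
described as the monomial ideal generated by the monomials `x^a` such that
`x^(m•a) ∈ I^(n*m)` for some positive integer `m`. -/
noncomputable def intCl {k : Type*} [Field k] {σ : Type*}
    (I : Ideal (MvPolynomial σ k)) (n : ℕ) : Ideal (MvPolynomial σ k) :=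
  Ideal.span {p | ∃ a : σ →₀ ℕ, p = monomial a (1 : k) ∧
    ∃ m : ℕ, 0 < m ∧ monomial (m • a) (1 : k) ∈ I ^ (n * m)}

private lemma intCl_mono {k : Type*} [Field k] {σ : Type*}
    {I J : Ideal (MvPolynomial σ k)} (h : I ≤ J) (n : ℕ) :
    intCl I n ≤ intCl J n := by
  apply Ideal.span_mono
  rintro p ⟨b, rfl, m, hm, hmem⟩
  exact ⟨b, rfl, m, hm, Ideal.pow_right_mono h _ hmem⟩

private lemma monomial_mem_span_iff {k : Type*} [Field k] {σ : Type*}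
    (S : Set (σ →₀ ℕ)) (b : σ →₀ ℕ) :
    monomial b (1 : k) ∈ Ideal.span ((fun s => monomial s (1 : k)) '' S) ↔
      ∃ s ∈ S, s ≤ b := by
  classical
  rw [mem_ideal_span_monomial_image]
  constructor
  · intro h
    exact h b (by rw [support_monomial, if_neg one_ne_zero]; exact Finset.mem_singleton_self b)
  · rintro ⟨s, hs, hsb⟩ xi hxi
    rw [support_monomial, if_neg one_ne_zero, Finset.mem_singleton] at hxi
    exact hxi ▸ ⟨s, hs, hsb⟩

private lemma multiset_card_sum {α β : Type*} (s : Finset α) (f : α → Multiset β) :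
    Multiset.card (∑ j ∈ s, f j) = ∑ j ∈ s, Multiset.card (f j) := by
  induction s using Finset.cons_induction with
  | empty => simp
  | cons a t h ih => simp [Finset.sum_cons, ih]

private lemma multiset_sum_sum {α β : Type*} [AddCommMonoid β] (s : Finset α)
    (f : α → Multiset β) :
    (∑ j ∈ s, f j).sum = ∑ j ∈ s, (f j).sum := by
  induction s using Finset.cons_induction with
  | empty => simp
  | cons a t h ih => simp [Finset.sum_cons, ih]

private lemma span_monomial_pow {k : Type*} [Field k] {σ : Type*}
    (S : Set (σ →₀ ℕ)) (N : ℕ) :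
    (Ideal.span ((fun s => monomial s (1 : k)) '' S)) ^ N =
      Ideal.span ((fun s => monomial s (1 : k)) ''
        {t | ∃ c : Multiset (σ →₀ ℕ), Multiset.card c = N ∧ (∀ x ∈ c, x ∈ S) ∧ c.sum = t}) := by
  induction N with
  | zero =>
    have hset : {t : σ →₀ ℕ | ∃ c : Multiset (σ →₀ ℕ),
        Multiset.card c = 0 ∧ (∀ x ∈ c, x ∈ S) ∧ c.sum = t} = {0} := by
      ext t
      constructor
      · rintro ⟨c, hc, -, rfl⟩
        simp [Multiset.card_eq_zero.mp hc]
      · rintro rfl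
        exact ⟨0, by simp⟩
    rw [pow_zero, hset, Set.image_singleton]
    simp [Ideal.one_eq_top, Ideal.span_singleton_one]
  | succ N ih =>
    rw [pow_succ, ih, Ideal.span_mul_span]
    congr 1
    ext p
    simp only [Set.mem_iUnion, Set.mem_image, Set.mem_setOf_eq, Set.mem_singleton_iff]
    constructor
    · rintro ⟨_, ⟨t, ⟨c, hcard, hmem, rfl⟩, rfl⟩, _, ⟨s, hs, rfl⟩, rfl⟩
      refine ⟨c.sum + s, ⟨s ::ₘ c, by simp [hcard], ?_, by simp [add_comm]⟩, ?_⟩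
      · intro x hx
        rcases Multiset.mem_cons.mp hx with rfl | h
        exacts [hs, hmem x h]
      · beta_reduce; rw [monomial_mul, one_mul]
    · rintro ⟨t, ⟨c, hcard, hmem, rfl⟩, rfl⟩
      obtain ⟨x, hx⟩ := Multiset.card_pos_iff_exists_mem.mp (by simp [hcard] : 0 < Multiset.card c)
      obtain ⟨c', rfl⟩ := Multiset.exists_cons_of_mem hx
      refine ⟨_, ⟨c'.sum, ⟨c', by simpa using hcard,
        fun y hy => hmem y (Multiset.mem_cons_of_mem hy), rfl⟩, rfl⟩,
        _, ⟨x, hmem x (Multiset.mem_cons_self _ _), rfl⟩, ?_⟩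
      beta_reduce; rw [monomial_mul, one_mul, Multiset.sum_cons, add_comm]

private lemma monomial_mem_span_pow_iff {k : Type*} [Field k] {σ : Type*}
    (S : Set (σ →₀ ℕ)) (N : ℕ) (b : σ →₀ ℕ) :
    monomial b (1 : k) ∈ (Ideal.span ((fun s => monomial s (1 : k)) '' S)) ^ N ↔
      ∃ c : Multiset (σ →₀ ℕ), Multiset.card c = N ∧ (∀ x ∈ c, x ∈ S) ∧ c.sum ≤ b := by
  rw [span_monomial_pow, monomial_mem_span_iff]
  constructor
  · rintro ⟨t, ⟨c, hcard, hmem, rfl⟩, hle⟩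
    exact ⟨c, hcard, hmem, hle⟩
  · rintro ⟨c, hcard, hmem, hle⟩
    exact ⟨c.sum, ⟨c, hcard, hmem, rfl⟩, hle⟩

private lemma multiset_card_le_sum {d : ℕ} (a : Fin d → ℕ) (c : Multiset (Fin d →₀ ℕ))
    (h : ∀ w ∈ c, (1 : ℚ) ≤ ∑ j, (w j : ℚ) / (a j : ℚ)) :
    (Multiset.card c : ℚ) ≤ ∑ j, ((c.sum : Fin d →₀ ℕ) j : ℚ) / (a j : ℚ) := by
  induction c using Multiset.induction with
  | empty => simp
  | cons w s ih =>
    have hsum : ∑ j, (((w ::ₘ s).sum : Fin d →₀ ℕ) j : ℚ) / (a j : ℚ)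
        = (∑ j, (w j : ℚ) / (a j : ℚ)) + ∑ j, ((s.sum : Fin d →₀ ℕ) j : ℚ) / (a j : ℚ) := by
      rw [← Finset.sum_add_distrib]
      refine Finset.sum_congr rfl fun j _ => ?_
      rw [Multiset.sum_cons, Finsupp.add_apply]
      push_cast
      ring
    rw [hsum, Multiset.card_cons]
    push_cast
    have h1 := h w (Multiset.mem_cons_self _ _)
    have h2 := ih fun x hx => h x (Multiset.mem_cons_of_mem hx)
    linarith

/-- If `I = (x^(v 1), …, x^(v q))` with `v i = a i • e i` for `i ≤ d` and
`⟨v i, α₀⟩ ≥ 1` for all `i`, where `α₀ = (1/a 1, …, 1/a d)`, then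
`\overline{I^n} = \overline{(x 1 ^ (a 1), …, x d ^ (a d))^n}` for all `n ≥ 1`. -/
theorem intCl_eq_intCl_pure_powers {k : Type*} [Field k] (d q : ℕ) (hdq : d ≤ q)
    (a : Fin d → ℕ) (ha : ∀ i, 0 < a i)
    (v : Fin q → (Fin d →₀ ℕ))
    (hv1 : ∀ i : Fin d, v (Fin.castLE hdq i) = Finsupp.single i (a i))
    (hge : ∀ i, (1 : ℚ) ≤ ∑ j, (v i j : ℚ) / (a j : ℚ))
    (n : ℕ) (hn : 1 ≤ n) :
    intCl (Ideal.span (Set.range fun i => monomial (v i) (1 : k))) n =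
      intCl (Ideal.span (Set.range fun i : Fin d =>
        monomial (Finsupp.single i (a i)) (1 : k))) n := by
  have haq : ∀ j, (0 : ℚ) < (a j : ℚ) := fun j => by exact_mod_cast ha j
  have hrI : (Set.range fun i => monomial (v i) (1 : k))
      = (fun s => monomial s (1 : k)) '' Set.range v := by
    rw [← Set.range_comp]; rfl
  have hrJ : (Set.range fun i : Fin d => monomial (Finsupp.single i (a i)) (1 : k))
      = (fun s => monomial s (1 : k)) ''
        Set.range (fun i : Fin d => Finsupp.single i (a i)) := by
    rw [← Set.range_comp]; rfl
  apply le_antisymm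
  · -- hard direction
    apply Ideal.span_le.mpr
    rintro p ⟨b, rfl, m, hm, hmem⟩
    rw [hrI, monomial_mem_span_pow_iff] at hmem
    obtain ⟨c, hcard, hcm, hcs⟩ := hmem
    -- rational inequality: n ≤ ∑ b j / a j
    have key : (n : ℚ) ≤ ∑ j, (b j : ℚ) / (a j : ℚ) := by
      have h1 : ((n * m : ℕ) : ℚ) ≤ ∑ j, ((c.sum : Fin d →₀ ℕ) j : ℚ) / (a j : ℚ) := by
        rw [← hcard]
        refine multiset_card_le_sum a c fun w hw => ?_
        obtain ⟨i, rfl⟩ := hcm w hw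
        exact hge i
      have h2 : ∑ j, ((c.sum : Fin d →₀ ℕ) j : ℚ) / (a j : ℚ)
          ≤ ∑ j, ((m : ℚ) * (b j : ℚ)) / (a j : ℚ) := by
        refine Finset.sum_le_sum fun j _ => ?_
        have hle : ((c.sum : Fin d →₀ ℕ) j : ℚ) ≤ (m : ℚ) * (b j : ℚ) := by
          have := (Finsupp.le_def.mp hcs) j
          rw [Finsupp.smul_apply, smul_eq_mul] at this
          exact_mod_cast this
        gcongr
      have h3 : ∑ j, ((m : ℚ) * (b j : ℚ)) / (a j : ℚ)
          = (m : ℚ) * ∑ j, (b j : ℚ) / (a j : ℚ) := by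
        rw [Finset.mul_sum]
        exact Finset.sum_congr rfl fun j _ => by rw [mul_div_assoc]
      have hmq : (0 : ℚ) < (m : ℚ) := by exact_mod_cast hm
      push_cast at h1
      rw [h3] at h2
      have := h1.trans h2
      nlinarith
    -- construct the membership in J ^ (n * M)
    set M := ∏ j, a j with hMdef
    have hMpos : 0 < M := Finset.prod_pos fun j _ => ha j
    have hdvd : ∀ j, a j ∣ M := fun j => Finset.dvd_prod_of_mem a (Finset.mem_univ j)
    set c' : Fin d → ℕ := fun j => (M / a j) * b j with hc'def
    have hc'cast : ∀ j, (c' j : ℚ) = (M : ℚ) * (b j : ℚ) / (a j : ℚ) := by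
      intro j
      rw [hc'def]
      push_cast [Nat.cast_div (hdvd j) (by exact_mod_cast (ha j).ne' : ((a j : ℚ)) ≠ 0)]
      ring
    have hc'a : ∀ j, c' j * a j = M * b j := by
      intro j
      rw [hc'def]
      rw [mul_right_comm, Nat.div_mul_cancel (hdvd j)]
    set K := ∑ j, c' j with hKdef
    have hK : n * M ≤ K := by
      have hq : ((n * M : ℕ) : ℚ) ≤ (K : ℚ) := by
        have hKq : (K : ℚ) = (M : ℚ) * ∑ j, (b j : ℚ) / (a j : ℚ) := by
          rw [hKdef]
          push_cast
          rw [Finset.mul_sum]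
          refine Finset.sum_congr rfl fun j _ => ?_
          rw [hc'cast j, mul_div_assoc]
        rw [hKq]
        push_cast
        have hMq : (0 : ℚ) ≤ (M : ℚ) := by positivity
        nlinarith
      exact_mod_cast hq
    set C : Multiset (Fin d →₀ ℕ) :=
      ∑ j, Multiset.replicate (c' j) (Finsupp.single j (a j)) with hCdef
    have hCcard : Multiset.card C = K := by
      rw [hCdef, hKdef, multiset_card_sum]
      exact Finset.sum_congr rfl fun j _ => Multiset.card_replicate _ _
    have hCsum : C.sum = M • b := by
      rw [hCdef, multiset_sum_sum]
      ext j'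
      rw [Finsupp.finset_sum_apply]
      have : ∀ j, ((Multiset.replicate (c' j) (Finsupp.single j (a j))).sum) j'
          = (Finsupp.single j (c' j * a j)) j' := by
        intro j
        rw [Multiset.sum_replicate]
        simp [Finsupp.smul_apply, Finsupp.single_apply, mul_comm]
      rw [Finset.sum_congr rfl fun j _ => this j]
      simp only [Finsupp.single_apply]
      rw [Finset.sum_ite_eq' Finset.univ j' (fun j => c' j * a j)]
      simp [hc'a j', Finsupp.smul_apply]
    refine Ideal.subset_span ⟨b, rfl, M, hMpos, ?_⟩
    have hmemJ : monomial (M • b) (1 : k) ∈ (Ideal.span ((fun s => monomial s (1 : k)) ''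
        Set.range (fun i : Fin d => Finsupp.single i (a i)))) ^ K := by
      rw [monomial_mem_span_pow_iff]
      refine ⟨C, hCcard, ?_, le_of_eq hCsum⟩
      intro x hx
      rw [hCdef] at hx
      obtain ⟨j, -, hj⟩ := Multiset.mem_sum.mp hx
      exact ⟨j, (Multiset.eq_of_mem_replicate hj).symm⟩
    rw [hrJ]
    exact Ideal.pow_le_pow_right hK hmemJ
  · -- easy direction
    refine intCl_mono (Ideal.span_mono ?_) n
    rintro p ⟨i, rfl⟩
    exact ⟨Fin.castLE hdq i, by simp [hv1]⟩
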